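/- Let α be a real number and let n be a positive integer. Then s(n,1,α) = Σ_{k=0}^{n-1} (k+1)·s(n,k+1)·(-α)^k. -/

import Mathlib

/-- Non-central Stirling numbers of the first kind `s(n, k, α)`. -/
noncomputable def ncStirling : ℕ → ℕ → ℝ → ℝ
  | 0, 0, _ => 1
  | 0, _ + 1, _ => 0
  | n + 1, 0, α => (-α - n) * ncStirling n 0 α
  | n + 1, k + 1, α => ncStirling n k α + (-α - n) * ncStirling n (k + 1) α

/-- Signed Stirling numbers of the first kind `s(n, k)`. -/
def stirling1 : ℕ → ℕ → ℤ
  | 0, 0 => 1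
  | 0, _ + 1 => 0
  | n + 1, 0 => -(n : ℤ) * stirling1 n 0
  | n + 1, k + 1 => stirling1 n k - (n : ℤ) * stirling1 n (k + 1)

lemma stirling1_eq_zero : ∀ n k, n < k → stirling1 n k = 0
  | 0, _ + 1, _ => rfl
  | n + 1, k + 1, h => by
      rw [stirling1, stirling1_eq_zero n k (by omega), stirling1_eq_zero n (k + 1) (by omega)]
      ring

lemma ncStirling_zero (α : ℝ) : ∀ n, ncStirling n 0 α =
    ∑ k ∈ Finset.range (n + 1), (stirling1 n k : ℝ) * (-α) ^ k
  | 0 => by simp [ncStirling, stirling1]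
  | n + 1 => by
    rw [show ncStirling (n + 1) 0 α = (-α - n) * ncStirling n 0 α from rfl,
      ncStirling_zero α n]
    have hsh : ∑ k ∈ Finset.range (n + 2), (stirling1 (n + 1) k : ℝ) * (-α) ^ k
        = (∑ k ∈ Finset.range (n + 1), (stirling1 (n + 1) (k + 1) : ℝ) * (-α) ^ (k + 1))
          + (stirling1 (n + 1) 0 : ℝ) * (-α) ^ 0 := Finset.sum_range_succ' _ _
    rw [hsh]
    have h1 : ∀ k ∈ Finset.range (n + 1), (stirling1 (n + 1) (k + 1) : ℝ) * (-α) ^ (k + 1)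
        = ((stirling1 n k : ℝ) - (n : ℝ) * (stirling1 n (k + 1) : ℝ)) * (-α) ^ (k + 1) := by
      intro k _
      rw [show stirling1 (n + 1) (k + 1) = stirling1 n k - (n : ℤ) * stirling1 n (k + 1) from rfl]
      push_cast
      ring
    rw [Finset.sum_congr rfl h1]
    have h2 : ∑ k ∈ Finset.range (n + 1), (stirling1 n (k + 1) : ℝ) * (-α) ^ (k + 1)
        = (∑ k ∈ Finset.range (n + 1), (stirling1 n k : ℝ) * (-α) ^ k)
          - (stirling1 n 0 : ℝ) := by
      have := Finset.sum_range_succ' (fun k => (stirling1 n k : ℝ) * (-α) ^ k) (n + 1)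
      rw [Finset.sum_range_succ (fun k => (stirling1 n k : ℝ) * (-α) ^ k) (n + 1),
        stirling1_eq_zero n (n + 1) (by omega)] at this
      simp at this ⊢
      linarith
    have h3 : ∑ k ∈ Finset.range (n + 1),
        ((stirling1 n k : ℝ) - (n : ℝ) * (stirling1 n (k + 1) : ℝ)) * (-α) ^ (k + 1)
        = (-α) * ∑ k ∈ Finset.range (n + 1), (stirling1 n k : ℝ) * (-α) ^ k
          - (n : ℝ) * ∑ k ∈ Finset.range (n + 1), (stirling1 n (k + 1) : ℝ) * (-α) ^ (k + 1) := by
      rw [Finset.mul_sum, Finset.mul_sum, ← Finset.sum_sub_distrib]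
      exact Finset.sum_congr rfl fun k _ => by ring
    rw [h3, h2, show stirling1 (n + 1) 0 = -(n : ℤ) * stirling1 n 0 from rfl]
    push_cast
    ring

lemma ncStirling_one (α : ℝ) : ∀ n, ncStirling n 1 α =
    ∑ k ∈ Finset.range n, ((k : ℝ) + 1) * (stirling1 n (k + 1) : ℝ) * (-α) ^ k
  | 0 => by simp [ncStirling]
  | n + 1 => by
    rw [show ncStirling (n + 1) 1 α
        = ncStirling n 0 α + (-α - n) * ncStirling n (0 + 1) α from rfl]
    rw [ncStirling_one α n, ncStirling_zero α n]
    set T := ∑ k ∈ Finset.range n, ((k : ℝ) + 1) * (stirling1 n (k + 1) : ℝ) * (-α) ^ k with hTdef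
    set S := ∑ k ∈ Finset.range (n + 1), (stirling1 n k : ℝ) * (-α) ^ k with hSdef
    have hT : ∑ k ∈ Finset.range (n + 1), ((k : ℝ) + 1) * (stirling1 n (k + 1) : ℝ) * (-α) ^ k
        = T := by
      rw [Finset.sum_range_succ, stirling1_eq_zero n (n + 1) (by omega)]
      simp
      rfl
    have hShift : ∑ k ∈ Finset.range (n + 1), (k : ℝ) * (stirling1 n k : ℝ) * (-α) ^ k
        = (-α) * T := by
      rw [hTdef, Finset.mul_sum,
        Finset.sum_range_succ' (fun k => (k : ℝ) * (stirling1 n k : ℝ) * (-α) ^ k) n]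
      simp only [Nat.cast_zero, zero_mul, add_zero]
      exact Finset.sum_congr rfl fun k _ => by push_cast; ring
    have h1 : ∀ k ∈ Finset.range (n + 1),
        ((k : ℝ) + 1) * (stirling1 (n + 1) (k + 1) : ℝ) * (-α) ^ k
        = (stirling1 n k : ℝ) * (-α) ^ k + (k : ℝ) * (stirling1 n k : ℝ) * (-α) ^ k
          - (n : ℝ) * (((k : ℝ) + 1) * (stirling1 n (k + 1) : ℝ) * (-α) ^ k) := by
      intro k _
      rw [show stirling1 (n + 1) (k + 1) = stirling1 n k - (n : ℤ) * stirling1 n (k + 1) from rfl]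
      push_cast
      ring
    rw [Finset.sum_congr rfl h1]
    rw [Finset.sum_sub_distrib, Finset.sum_add_distrib, ← Finset.mul_sum, hT, hShift, ← hSdef]
    ring

theorem ncStirling_one_poly (α : ℝ) (n : ℕ) (hn : 0 < n) :
    ncStirling n 1 α =
      ∑ k ∈ Finset.range n, ((k : ℝ) + 1) * (stirling1 n (k + 1) : ℝ) * (-α) ^ k := by
  exact ncStirling_one α n
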